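/- (Strict negative type ⟸ generalized resistance metric) Let Q be a real symmetric PSD n×n matrix with ker(Q) = span(1), and let Ω := 1ζᵀ + ζ1ᵀ − 2Q† with ζ := diagvec(Q†). Then Ω is a strict negative type matrix: for every f ∈ ℝⁿ with 1ᵀf = 0 and f ≠ 0, fᵀΩf < 0. -/

import Mathlib

open Matrix Classical

/-- The Moore–Penrose pseudoinverse of a real matrix, defined via its four
characterizing Penrose equations (which have a unique solution). -/
noncomputable def pinv {m k : Type*} [Fintype m] [Fintype k]
    (A : Matrix m k ℝ) : Matrix k m ℝ :=
  if h : ∃ X : Matrix k m ℝ,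
      A * X * A = A ∧ X * A * X = X ∧ (A * X)ᵀ = A * X ∧ (X * A)ᵀ = X * A
  then h.choose else 0

lemma penrose_exists {n : ℕ} (A : Matrix (Fin n) (Fin n) ℝ) (hA : A.IsHermitian) :
    ∃ X : Matrix (Fin n) (Fin n) ℝ,
      A * X * A = A ∧ X * A * X = X ∧ (A * X)ᵀ = A * X ∧ (X * A)ᵀ = X * A := by
  classical
  set U : Matrix (Fin n) (Fin n) ℝ := (hA.eigenvectorUnitary : Matrix (Fin n) (Fin n) ℝ) with hUdef
  have hUU : star U * U = 1 := mem_unitaryGroup_iff'.mp hA.eigenvectorUnitary.2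
  have h2 : ∀ M : Matrix (Fin n) (Fin n) ℝ, star U * (U * M) = M := by
    intro M; rw [← mul_assoc, hUU, one_mul]
  set d : Fin n → ℝ := hA.eigenvalues with hd
  set e : Fin n → ℝ := fun i => if d i = 0 then 0 else (d i)⁻¹ with he
  have hspec : A = U * diagonal d * star U := by
    have := hA.spectral_theorem
    simpa using this
  have key : ∀ v w : Fin n → ℝ,
      (U * diagonal v * star U) * (U * diagonal w * star U)
        = U * diagonal (v * w) * star U := by
    intro v w
    have hD : diagonal v * diagonal w = diagonal (v * w) := by
      rw [diagonal_mul_diagonal]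
      rfl
    rw [← hD]
    simp only [mul_assoc, h2]
  have hsym : ∀ v : Fin n → ℝ, (U * diagonal v * star U)ᵀ = U * diagonal v * star U := by
    intro v
    rw [← conjTranspose_eq_transpose_of_trivial]
    simp [Matrix.star_eq_conjTranspose, conjTranspose_mul, diagonal_conjTranspose, mul_assoc]
  have hfun1 : d * e * d = d := by
    funext i
    by_cases h : d i = 0
    · simp [Pi.mul_apply, he, h]
    · simp only [Pi.mul_apply, he, h, ↓reduceIte]
      rw [mul_inv_cancel₀ h, one_mul]
  have hfun2 : e * d * e = e := by
    funext i
    by_cases h : d i = 0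
    · simp [Pi.mul_apply, he, h]
    · simp only [Pi.mul_apply, he, h, ↓reduceIte]
      rw [inv_mul_cancel₀ h, one_mul]
  refine ⟨U * diagonal e * star U, ?_, ?_, ?_, ?_⟩
  · rw [hspec, key, key, hfun1]
  · rw [hspec, key, key, hfun2]
  · rw [hspec, key]; exact hsym _
  · rw [hspec, key]; exact hsym _

lemma penrose_unique {m k : Type*} [Fintype m] [Fintype k]
    (A : Matrix m k ℝ) (X Y : Matrix k m ℝ)
    (hX : A * X * A = A ∧ X * A * X = X ∧ (A * X)ᵀ = A * X ∧ (X * A)ᵀ = X * A)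
    (hY : A * Y * A = A ∧ Y * A * Y = Y ∧ (A * Y)ᵀ = A * Y ∧ (Y * A)ᵀ = Y * A) :
    X = Y := by
  obtain ⟨hX1, hX2, hX3, hX4⟩ := hX
  obtain ⟨hY1, hY2, hY3, hY4⟩ := hY
  have hAX : A * X = A * Y := by
    calc A * X = (A * X)ᵀ := hX3.symm
      _ = ((A * Y * A) * X)ᵀ := by rw [hY1]
      _ = ((A * Y) * (A * X))ᵀ := by rw [Matrix.mul_assoc (A * Y)]
      _ = (A * X)ᵀ * (A * Y)ᵀ := by rw [transpose_mul]
      _ = (A * X) * (A * Y) := by rw [hX3, hY3]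
      _ = (A * X * A) * Y := by simp only [Matrix.mul_assoc]
      _ = A * Y := by rw [hX1]
  have hXA : X * A = Y * A := by
    calc X * A = (X * A)ᵀ := hX4.symm
      _ = (X * (A * Y * A))ᵀ := by rw [hY1]
      _ = ((X * A) * (Y * A))ᵀ := by simp only [Matrix.mul_assoc]
      _ = (Y * A)ᵀ * (X * A)ᵀ := by rw [transpose_mul]
      _ = (Y * A) * (X * A) := by rw [hX4, hY4]
      _ = Y * (A * X * A) := by simp only [Matrix.mul_assoc]
      _ = Y * A := by rw [hX1]
  calc X = X * A * X := hX2.symm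
    _ = X * (A * Y) := by rw [Matrix.mul_assoc, hAX]
    _ = (X * A) * Y := by rw [Matrix.mul_assoc]
    _ = (Y * A) * Y := by rw [hXA]
    _ = Y := hY2

theorem resistance_matrix_strict_negative_type
    {n : ℕ} (Q : Matrix (Fin n) (Fin n) ℝ)
    (hQ : Q.PosSemidef)
    (hker : ∀ v : Fin n → ℝ, Q.mulVec v = 0 ↔ ∃ c : ℝ, v = fun _ => c)
    (ζ : Fin n → ℝ) (hζ : ζ = fun i => pinv Q i i)
    (Ω : Matrix (Fin n) (Fin n) ℝ)
    (hΩ : Ω = Matrix.of (fun _ j => ζ j) + Matrix.of (fun i _ => ζ i) - 2 • pinv Q) :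
    ∀ f : Fin n → ℝ, (∑ i, f i) = 0 → f ≠ 0 → f ⬝ᵥ Ω.mulVec f < 0 := by
  intro f hf1 hf0
  have hex := penrose_exists Q hQ.1
  set X : Matrix (Fin n) (Fin n) ℝ := pinv Q with hXdef
  have hXspec : Q * X * Q = Q ∧ X * Q * X = X ∧ (Q * X)ᵀ = Q * X ∧ (X * Q)ᵀ = X * Q := by
    rw [hXdef, pinv, dif_pos hex]
    exact hex.choose_spec
  obtain ⟨h1, h2, h3, h4⟩ := hXspec
  have hQsymm : Qᵀ = Q := by
    have := hQ.1
    rwa [IsHermitian, conjTranspose_eq_transpose_of_trivial] at this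
  have hXsymm : Xᵀ = X := by
    refine penrose_unique Q Xᵀ X ⟨?_, ?_, ?_, ?_⟩ ⟨h1, h2, h3, h4⟩
    · have := congrArg Matrix.transpose h1
      simp only [transpose_mul, hQsymm] at this
      rw [mul_assoc]
      exact this
    · have := congrArg Matrix.transpose h2
      simp only [transpose_mul, hQsymm] at this
      rw [mul_assoc]
      exact this
    · calc (Q * Xᵀ)ᵀ = X * Qᵀ := by rw [transpose_mul, transpose_transpose]
        _ = X * Q := by rw [hQsymm]
        _ = (X * Q)ᵀ := h4.symm
        _ = Qᵀ * Xᵀ := by rw [transpose_mul]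
        _ = Q * Xᵀ := by rw [hQsymm]
    · calc (Xᵀ * Q)ᵀ = Qᵀ * X := by rw [transpose_mul, transpose_transpose]
        _ = Q * X := by rw [hQsymm]
        _ = (Q * X)ᵀ := h3.symm
        _ = Xᵀ * Qᵀ := by rw [transpose_mul]
        _ = Xᵀ * Q := by rw [hQsymm]
  have hcomm : X * Q = Q * X := by
    calc X * Q = (X * Q)ᵀ := h4.symm
      _ = Qᵀ * Xᵀ := by rw [transpose_mul]
      _ = Q * X := by rw [hQsymm, hXsymm]
  set g : Fin n → ℝ := X *ᵥ f with hg
  have hvm : f ᵥ* X = g := by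
    rw [← mulVec_transpose, hXsymm]
  have hfXf : f ⬝ᵥ X *ᵥ f = g ⬝ᵥ Q *ᵥ g := by
    conv_lhs => rw [← h2]
    rw [← mulVec_mulVec, ← mulVec_mulVec, dotProduct_mulVec, hvm]
  have hge : 0 ≤ g ⬝ᵥ Q *ᵥ g := by simpa using hQ.dotProduct_mulVec_nonneg g
  have hne : g ⬝ᵥ Q *ᵥ g ≠ 0 := by
    intro h0
    have hQg : Q *ᵥ g = 0 := (hQ.dotProduct_mulVec_zero_iff g).mp (by simpa using h0)
    have hXQf : X *ᵥ Q *ᵥ f = 0 := by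
      rw [mulVec_mulVec, hcomm, ← mulVec_mulVec]
      exact hQg
    have hker2 : Q *ᵥ (f - X *ᵥ Q *ᵥ f) = 0 := by
      rw [mulVec_sub, mulVec_mulVec, mulVec_mulVec, h1, sub_self]
    obtain ⟨c, hc⟩ := (hker _).mp hker2
    have hfc : f = fun _ => c := by
      funext i
      have := congrFun hc i
      simpa [hXQf] using this
    obtain ⟨i, hi⟩ : ∃ i, f i ≠ 0 := by
      by_contra h
      push_neg at h
      exact hf0 (funext h)
    have hc0 : c ≠ 0 := by rw [hfc] at hi; exact hi
    have hsum : (n : ℝ) * c = 0 := by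
      have hs : (∑ j, f j) = (n : ℝ) * c := by
        rw [hfc]
        simp [Finset.sum_const, Finset.card_univ, nsmul_eq_mul]
      rw [← hs, hf1]
    rcases mul_eq_zero.mp hsum with h | h
    · exact absurd h (Nat.cast_ne_zero.mpr i.pos.ne')
    · exact hc0 h
  have hpos : 0 < f ⬝ᵥ X *ᵥ f := by
    rw [hfXf]
    exact lt_of_le_of_ne hge (Ne.symm hne)
  have e1 : f ⬝ᵥ ((Matrix.of (fun _ j => ζ j) : Matrix (Fin n) (Fin n) ℝ) *ᵥ f) = 0 := by
    simp only [dotProduct, mulVec, Matrix.of_apply]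
    rw [← Finset.sum_mul, hf1, zero_mul]
  have e2 : f ⬝ᵥ ((Matrix.of (fun i _ => ζ i) : Matrix (Fin n) (Fin n) ℝ) *ᵥ f) = 0 := by
    simp only [dotProduct, mulVec, Matrix.of_apply]
    have h3' : ∀ i : Fin n, ∑ j, ζ i * f j = 0 := by
      intro i
      rw [← Finset.mul_sum, hf1, mul_zero]
    calc ∑ i, f i * ∑ j, ζ i * f j = ∑ i, f i * 0 := by
          refine Finset.sum_congr rfl fun i _ => ?_
          rw [h3' i]
      _ = 0 := by simp
  rw [hΩ, sub_mulVec, add_mulVec, dotProduct_sub, dotProduct_add, e1, e2]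
  have h2X : (2 • X : Matrix (Fin n) (Fin n) ℝ) *ᵥ f = X *ᵥ f + X *ᵥ f := by
    have : (2 • X : Matrix (Fin n) (Fin n) ℝ) = X + X := two_smul _ X
    rw [this, add_mulVec]
  rw [h2X, dotProduct_add]
  linarith
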